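/- Let G be a profinite group and A a projective profinite Z_p[[G]]-module such that for every irreducible Z_p[[G]]-module M one has dim Hom_{Z_p[[G]]}(A,M) = dim M. Then A is isomorphic to Z_p[[G]] as a Z_p[[G]]-module. -/

import Mathlib

noncomputable def lenZ (M : Type*) : ℕ := (Nat.card M).primeFactorsList.length

section

variable (p : ℕ) [Fact p.Prime] (G : Type) [Group G] [TopologicalSpace G]

/-- A profinite `ℤ_p[[G]]`-module. -/
class ProfiniteZpGModule (K : Type) [AddCommGroup K] [Module ℤ_[p] K]
    [TopologicalSpace K] (ρ : Representation ℤ_[p] G K) : Prop where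
  compact : CompactSpace K
  t2 : T2Space K
  td : TotallyDisconnectedSpace K
  addGroup : IsTopologicalAddGroup K
  contSMul : ContinuousSMul ℤ_[p] K
  contAction : Continuous fun q : G × K => ρ q.1 q.2

/-- An irreducible `ℤ_p[[G]]`-module. -/
structure IrredMod where
  carrier : Type
  [addCommGroup : AddCommGroup carrier]
  [module : Module ℤ_[p] carrier]
  [finite : Finite carrier]
  ρ : Representation ℤ_[p] G carrier
  cont : ∀ a : carrier, IsOpen {g : G | ρ g a = a}
  nontrivial : Nontrivial carrier
  irred : ∀ W : Submodule ℤ_[p] carrier,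
    (∀ (g : G) (m : carrier), m ∈ W → ρ g m ∈ W) → W = ⊥ ∨ W = ⊤

attribute [instance] IrredMod.addCommGroup IrredMod.module IrredMod.finite

/-- `Hom_{ℤ_p[[G]]}(K, M)` for an irreducible module `M`. -/
def HomGMod {K : Type} [AddCommGroup K] [Module ℤ_[p] K] [TopologicalSpace K]
    (ρ : Representation ℤ_[p] G K) (M : IrredMod p G) : Type :=
  {f : K →ₗ[ℤ_[p]] M.carrier //
    (@Continuous K M.carrier _ ⊥ f) ∧ ∀ (g : G) (k : K), f (ρ g k) = M.ρ g (f k)}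

/-- A projective profinite `ℤ_p[[G]]`-module: continuous `G`-maps to quotients of
profinite `ℤ_p[[G]]`-modules lift. -/
def IsProjectiveMod {A : Type} [AddCommGroup A] [Module ℤ_[p] A] [TopologicalSpace A]
    (ρA : Representation ℤ_[p] G A) : Prop :=
  ∀ (X : Type) [AddCommGroup X] [Module ℤ_[p] X] [TopologicalSpace X]
    (ρX : Representation ℤ_[p] G X) (_ : ProfiniteZpGModule p G X ρX)
    (Y : Type) [AddCommGroup Y] [Module ℤ_[p] Y] [TopologicalSpace Y]
    (ρY : Representation ℤ_[p] G Y) (_ : ProfiniteZpGModule p G Y ρY)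
    (f : X →ₗ[ℤ_[p]] Y), Continuous f → Function.Surjective f →
    (∀ (g : G) (x : X), f (ρX g x) = ρY g (f x)) →
    ∀ u : A →ₗ[ℤ_[p]] Y, Continuous u → (∀ (g : G) (a : A), u (ρA g a) = ρY g (u a)) →
    ∃ v : A →ₗ[ℤ_[p]] X, Continuous v ∧ (∀ (g : G) (a : A), v (ρA g a) = ρX g (v a)) ∧
      f ∘ₗ v = u

/-- `(R, e)` is the free profinite `ℤ_p[[G]]`-module of rank one, i.e. `ℤ_p[[G]]` itself:
continuous `G`-maps out of `R` correspond uniquely to the image of `e`. -/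
def IsFreeOfRankOne {R : Type} [AddCommGroup R] [Module ℤ_[p] R] [TopologicalSpace R]
    (ρR : Representation ℤ_[p] G R) (e : R) : Prop :=
  ∀ (K : Type) [AddCommGroup K] [Module ℤ_[p] K] [TopologicalSpace K]
    (ρK : Representation ℤ_[p] G K) (_ : ProfiniteZpGModule p G K ρK) (k : K),
    ∃! φ : R →ₗ[ℤ_[p]] K,
      (Continuous φ ∧ ∀ (g : G) (r : R), φ (ρR g r) = ρK g (φ r)) ∧ φ e = k

end

namespace Stmt9aux
noncomputable section
set_option linter.unusedSectionVars false

variable {p : ℕ} [Fact p.Prime] {G : Type} [Group G] [TopologicalSpace G]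

lemma rep_mul_apply {K : Type} [AddCommGroup K] [Module ℤ_[p] K]
    (ρ : Representation ℤ_[p] G K) (g h : G) (x : K) :
    ρ (g * h) x = ρ g (ρ h x) := by
  rw [map_mul]; rfl

lemma rep_inv_cancel {K : Type} [AddCommGroup K] [Module ℤ_[p] K]
    (ρ : Representation ℤ_[p] G K) (g : G) (x : K) :
    ρ g⁻¹ (ρ g x) = x := by
  rw [← rep_mul_apply, inv_mul_cancel, map_one]; rfl

/-- Stability of a submodule under the `G`-action. -/
def Stab {K : Type} [AddCommGroup K] [Module ℤ_[p] K] (ρ : Representation ℤ_[p] G K)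
    (W : Submodule ℤ_[p] K) : Prop :=
  ∀ (g : G) (x : K), x ∈ W → ρ g x ∈ W

/-- A finite `ℤ_p[[G]]`-module with open stabilizers. -/
structure FinM (p : ℕ) [Fact p.Prime] (G : Type) [Group G] [TopologicalSpace G] where
  carrier : Type
  [addCommGroup : AddCommGroup carrier]
  [module : Module ℤ_[p] carrier]
  [finite : Finite carrier]
  ρ : Representation ℤ_[p] G carrier
  cont : ∀ a : carrier, IsOpen {g : G | ρ g a = a}

attribute [instance] FinM.addCommGroup FinM.module FinM.finite

@[reducible] def _root_.IrredMod.toFinM (M : IrredMod p G) : FinM p G :=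
  { carrier := M.carrier, ρ := M.ρ, cont := M.cont }

/-- Continuous equivariant hom into a finite module. -/
def FHom {K : Type} [AddCommGroup K] [Module ℤ_[p] K] [TopologicalSpace K]
    (ρ : Representation ℤ_[p] G K) (N : FinM p G) : Type :=
  {f : K →ₗ[ℤ_[p]] N.carrier //
    (@Continuous K N.carrier _ ⊥ f) ∧ ∀ (g : G) (k : K), f (ρ g k) = N.ρ g (f k)}

def homGMod_equiv {K : Type} [AddCommGroup K] [Module ℤ_[p] K] [TopologicalSpace K]
    (ρ : Representation ℤ_[p] G K) (M : IrredMod p G) :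
    HomGMod p G ρ M ≃ FHom ρ M.toFinM :=
  Equiv.refl _

section LevelSets

variable [IsTopologicalGroup G]

lemma isOpen_levelSet (N : FinM p G) (a b : N.carrier) : IsOpen {g : G | N.ρ g a = b} := by
  by_cases h : ∃ g₀ : G, N.ρ g₀ a = b
  · obtain ⟨g₀, hg₀⟩ := h
    have hset : {g : G | N.ρ g a = b} = (fun g => g₀⁻¹ * g) ⁻¹' {g : G | N.ρ g a = a} := by
      ext g
      simp only [Set.mem_setOf_eq, Set.mem_preimage]
      constructor
      · intro hg
        rw [rep_mul_apply, hg, ← hg₀, rep_inv_cancel]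
      · intro hg
        have h1 : N.ρ (g₀ * (g₀⁻¹ * g)) a = N.ρ g₀ (N.ρ (g₀⁻¹ * g) a) := rep_mul_apply ..
        rw [mul_inv_cancel_left] at h1
        rw [h1, hg, hg₀]
    rw [hset]
    exact (N.cont a).preimage (by continuity)
  · have hset : {g : G | N.ρ g a = b} = ∅ := by
      ext g; simp only [Set.mem_setOf_eq, Set.mem_empty_iff_false, iff_false]
      exact fun hg => h ⟨g, hg⟩
    rw [hset]; exact isOpen_empty

end LevelSets

section SmulOpen

lemma isOpen_span_p_pow (k : ℕ) :
    IsOpen ((Ideal.span {(p : ℤ_[p]) ^ k} : Ideal ℤ_[p]) : Set ℤ_[p]) := by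
  rw [Metric.isOpen_iff]
  intro x hx
  have hp0 : (0 : ℝ) < (p : ℝ) ^ (-(k : ℤ)) :=
    zpow_pos (by exact_mod_cast (Fact.out : p.Prime).pos) _
  refine ⟨(p : ℝ) ^ (-(k : ℤ)), hp0, fun z hz => ?_⟩
  have hzx : z - x ∈ (Ideal.span {(p : ℤ_[p]) ^ k} : Ideal ℤ_[p]) := by
    rw [← PadicInt.norm_le_pow_iff_mem_span_pow]
    exact le_of_lt (by simpa [dist_eq_norm] using hz)
  have hz' : z = (z - x) + x := by ring
  rw [hz']
  exact Ideal.add_mem _ hzx hx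

variable {Qc : Type} [AddCommGroup Qc] [Module ℤ_[p] Qc] [Finite Qc]

lemma exists_pow_smul_eq_zero (q : Qc) : ∃ k : ℕ, ((p : ℤ_[p]) ^ k) • q = 0 := by
  obtain ⟨c₁, c₂, hne, heq⟩ := Finite.exists_ne_map_eq_of_infinite (fun c : ℤ_[p] => c • q)
  have hc : (c₁ - c₂) • q = 0 := by
    have heq' : c₁ • q = c₂ • q := heq
    rw [sub_smul, heq', sub_self]
  set c := c₁ - c₂ with hcdef
  have hcne : c ≠ 0 := sub_ne_zero.mpr hne
  refine ⟨c.valuation, ?_⟩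
  set u := PadicInt.unitCoeff hcne with hu
  have hspec : c = (u : ℤ_[p]) * (p : ℤ_[p]) ^ c.valuation := PadicInt.unitCoeff_spec hcne
  have h1 : (u : ℤ_[p]) • (((p : ℤ_[p]) ^ c.valuation) • q) = 0 := by
    rw [← mul_smul, ← hspec, hc]
  have h2 := congrArg (fun z => ((u⁻¹ : ℤ_[p]ˣ) : ℤ_[p]) • z) h1
  simpa [← mul_smul] using h2

lemma exists_pow_smul_eq_zero_uniform : ∃ k : ℕ, ∀ q : Qc, ((p : ℤ_[p]) ^ k) • q = 0 := by
  cases nonempty_fintype Qc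
  choose kk hkk using fun q : Qc => exists_pow_smul_eq_zero (p := p) q
  refine ⟨(Finset.univ : Finset Qc).sup kk, fun q => ?_⟩
  have hle : kk q ≤ (Finset.univ : Finset Qc).sup kk := Finset.le_sup (Finset.mem_univ q)
  obtain ⟨d, hd⟩ := Nat.exists_eq_add_of_le hle
  rw [hd, pow_add, mul_comm, mul_smul, hkk q, smul_zero]

lemma isOpen_smulLevel (q b : Qc) : IsOpen {c : ℤ_[p] | c • q = b} := by
  obtain ⟨k, hk⟩ := exists_pow_smul_eq_zero_uniform (p := p) (Qc := Qc)
  rw [isOpen_iff_mem_nhds]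
  intro c₀ hc₀
  have hsub : (fun c => c - c₀) ⁻¹' ((Ideal.span {(p : ℤ_[p]) ^ k} : Ideal ℤ_[p]) : Set ℤ_[p])
      ⊆ {c : ℤ_[p] | c • q = b} := by
    intro c hcmem
    simp only [Set.mem_preimage, SetLike.mem_coe, Ideal.mem_span_singleton] at hcmem
    obtain ⟨t, ht⟩ := hcmem
    have : c = c₀ + (p : ℤ_[p]) ^ k * t := by rw [← ht]; ring
    simp only [Set.mem_setOf_eq] at hc₀ ⊢
    rw [this, add_smul, hc₀, mul_smul, hk, add_zero]
  refine Filter.mem_of_superset ?_ hsub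
  refine IsOpen.mem_nhds ?_ ?_
  · exact (isOpen_span_p_pow k).preimage (by continuity)
  · simp only [Set.mem_preimage, sub_self, SetLike.mem_coe]
    exact Ideal.zero_mem _

end SmulOpen

section FinMTop

variable [IsTopologicalGroup G]

lemma finm_profinite (N : FinM p G) :
    @ProfiniteZpGModule p _ G _ _ N.carrier _ _ ⊥ N.ρ := by
  letI : TopologicalSpace N.carrier := ⊥
  haveI : DiscreteTopology N.carrier := ⟨rfl⟩
  refine ⟨inferInstance, inferInstance, inferInstance,
    { toContinuousAdd := ⟨continuous_of_discreteTopology⟩,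
      toContinuousNeg := ⟨continuous_of_discreteTopology⟩ }, ⟨?_⟩, ?_⟩
  · rw [continuous_discrete_rng]
    intro b
    have hset : (fun z : ℤ_[p] × N.carrier => z.1 • z.2) ⁻¹' {b}
        = ⋃ q : N.carrier, {c : ℤ_[p] | c • q = b} ×ˢ ({q} : Set N.carrier) := by
      ext ⟨c, q'⟩
      simp only [Set.mem_preimage, Set.mem_singleton_iff, Set.mem_iUnion, Set.mem_prod,
        Set.mem_setOf_eq]
      constructor
      · intro h; exact ⟨q', h, rfl⟩
      · rintro ⟨q, h1, rfl⟩; exact h1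
    rw [hset]
    exact isOpen_iUnion fun q => (isOpen_smulLevel q b).prod (isOpen_discrete _)
  · rw [continuous_discrete_rng]
    intro b
    have hset : (fun z : G × N.carrier => N.ρ z.1 z.2) ⁻¹' {b}
        = ⋃ q : N.carrier, {g : G | N.ρ g q = b} ×ˢ ({q} : Set N.carrier) := by
      ext ⟨g, q'⟩
      simp only [Set.mem_preimage, Set.mem_singleton_iff, Set.mem_iUnion, Set.mem_prod,
        Set.mem_setOf_eq]
      constructor
      · intro h; exact ⟨q', h, rfl⟩
      · rintro ⟨q, h1, rfl⟩; exact h1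
    rw [hset]
    exact isOpen_iUnion fun q => (isOpen_levelSet N q b).prod (isOpen_discrete _)

end FinMTop

section SubQuot

variable {K : Type} [AddCommGroup K] [Module ℤ_[p] K]

/-- Restriction of a representation to a stable submodule. -/
def subRep (ρ : Representation ℤ_[p] G K) (W : Submodule ℤ_[p] K) (hW : Stab ρ W) :
    Representation ℤ_[p] G ↥W where
  toFun g := (ρ g).restrict (fun x hx => hW g x hx)
  map_one' := by
    ext x
    simp only [LinearMap.restrict_coe_apply, map_one, Module.End.one_apply]
  map_mul' g h := by
    ext x
    simp only [LinearMap.restrict_coe_apply, Module.End.mul_apply, rep_mul_apply]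

@[simp] lemma subRep_coe (ρ : Representation ℤ_[p] G K) (W : Submodule ℤ_[p] K)
    (hW : Stab ρ W) (g : G) (x : ↥W) :
    (↑(subRep ρ W hW g x) : K) = ρ g ↑x := rfl

/-- Quotient representation by a stable submodule. -/
def quotRep (ρ : Representation ℤ_[p] G K) (W : Submodule ℤ_[p] K) (hW : Stab ρ W) :
    Representation ℤ_[p] G (K ⧸ W) where
  toFun g := W.mapQ W (ρ g) (fun x hx => hW g x hx)
  map_one' := by
    apply Submodule.linearMap_qext
    ext x
    simp only [LinearMap.comp_apply, Submodule.mkQ_apply, Submodule.mapQ_apply, map_one,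
      Module.End.one_apply]
  map_mul' g h := by
    apply Submodule.linearMap_qext
    ext x
    simp only [LinearMap.comp_apply, Submodule.mkQ_apply, Submodule.mapQ_apply,
      Module.End.mul_apply, rep_mul_apply]

@[simp] lemma quotRep_mk (ρ : Representation ℤ_[p] G K) (W : Submodule ℤ_[p] K)
    (hW : Stab ρ W) (g : G) (x : K) :
    quotRep ρ W hW g (Submodule.Quotient.mk x) = Submodule.Quotient.mk (ρ g x) :=
  Submodule.mapQ_apply W W (ρ g) (h := fun y hy => hW g y hy) x

end SubQuot

section FinMSubQuot

variable [IsTopologicalGroup G]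

/-- Submodule of a `FinM` as a `FinM`. -/
@[reducible] def FinM.sub (N : FinM p G) (W : Submodule ℤ_[p] N.carrier) (hW : Stab N.ρ W) : FinM p G where
  carrier := ↥W
  ρ := subRep N.ρ W hW
  cont a := by
    have hset : {g : G | subRep N.ρ W hW g a = a} = {g : G | N.ρ g ↑a = ↑a} := by
      ext g
      simp only [Set.mem_setOf_eq, Subtype.ext_iff, subRep_coe]
    rw [hset]
    exact N.cont ↑a

/-- Quotient of a `FinM` by a stable submodule as a `FinM`. -/
@[reducible] def FinM.quot (N : FinM p G) (W : Submodule ℤ_[p] N.carrier) (hW : Stab N.ρ W) : FinM p G where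
  carrier := N.carrier ⧸ W
  finite := Finite.of_surjective _ (Submodule.Quotient.mk_surjective W)
  ρ := quotRep N.ρ W hW
  cont a := by
    obtain ⟨x, rfl⟩ := Submodule.Quotient.mk_surjective W a
    have hset : {g : G | quotRep N.ρ W hW g (Submodule.Quotient.mk x) = Submodule.Quotient.mk x}
        = ⋃ (z : N.carrier) (_ : Submodule.Quotient.mk z = (Submodule.Quotient.mk x : N.carrier ⧸ W)),
          {g : G | N.ρ g x = z} := by
      ext g
      simp only [Set.mem_setOf_eq, Set.mem_iUnion, quotRep_mk]
      constructor
      · intro h; exact ⟨N.ρ g x, h, rfl⟩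
      · rintro ⟨z, hz, rfl⟩; exact hz
    rw [hset]
    exact isOpen_iUnion fun z => isOpen_iUnion fun _ => isOpen_levelSet N x z

end FinMSubQuot

section Maximal

lemma exists_maximal_stab (N : FinM p G) (hNT : Nontrivial N.carrier) :
    ∃ W : Submodule ℤ_[p] N.carrier, Stab N.ρ W ∧ W ≠ ⊤ ∧
      ∀ W', Stab N.ρ W' → W < W' → W' = ⊤ := by
  classical
  set S : Set (Submodule ℤ_[p] N.carrier) := {W | Stab N.ρ W ∧ W ≠ ⊤} with hS
  have hbot : (⊥ : Submodule ℤ_[p] N.carrier) ∈ S := by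
    constructor
    · intro g x hx
      simp only [Submodule.mem_bot] at hx
      simp [hx]
    · exact bot_ne_top
  haveI : Finite (Submodule ℤ_[p] N.carrier) :=
    Finite.of_injective _ SetLike.coe_injective
  have hfin : S.Finite := Set.toFinite S
  obtain ⟨W, hWS, hmax0⟩ := Set.Finite.exists_maximalFor (fun (W : Submodule ℤ_[p] N.carrier) => Nat.card ↥W) S hfin ⟨⊥, hbot⟩
  have hmax : ∀ W' ∈ S, Nat.card ↥W ≤ Nat.card ↥W' → Nat.card ↥W = Nat.card ↥W' :=
    fun W' h1 h2 => le_antisymm h2 (hmax0 h1 h2)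
  refine ⟨W, hWS.1, hWS.2, fun W' hW' hlt => ?_⟩
  by_contra hne
  have hW'S : W' ∈ S := ⟨hW', hne⟩
  have hss : (W : Set N.carrier) ⊂ (W' : Set N.carrier) := by
    rw [Set.ssubset_iff_of_subset (fun x hx => hlt.le hx)]
    obtain ⟨x, hxW', hxW⟩ := SetLike.exists_of_lt hlt
    exact ⟨x, hxW', hxW⟩
  have hcard : Nat.card ↥W < Nat.card ↥W' := Set.Finite.card_lt_card (Set.toFinite _) hss
  exact absurd (hmax W' hW'S (le_of_lt hcard)) (ne_of_lt hcard)

variable [IsTopologicalGroup G]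

/-- The irreducible quotient of a finite module by a maximal stable submodule. -/
def maxQuotIrred (N : FinM p G) (W : Submodule ℤ_[p] N.carrier) (hW : Stab N.ρ W)
    (hWtop : W ≠ ⊤) (hmax : ∀ W', Stab N.ρ W' → W < W' → W' = ⊤) : IrredMod p G where
  carrier := N.carrier ⧸ W
  finite := Finite.of_surjective _ (Submodule.Quotient.mk_surjective W)
  ρ := quotRep N.ρ W hW
  cont := (FinM.quot N W hW).cont
  nontrivial := by
    obtain ⟨x, hx⟩ := SetLike.exists_of_lt (lt_of_le_of_ne (le_top : W ≤ ⊤) hWtop)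
    exact ⟨Submodule.Quotient.mk x, 0, by
      rw [Ne, Submodule.Quotient.mk_eq_zero]
      exact hx.2⟩
  irred := by
    intro W' hstab'
    set V := Submodule.comap W.mkQ W' with hV
    have hVstab : Stab N.ρ V := by
      intro g x hx
      simp only [hV, Submodule.mem_comap, Submodule.mkQ_apply] at hx ⊢
      have := hstab' g _ hx
      rwa [quotRep_mk] at this
    have hWV : W ≤ V := by
      intro x hx
      simp only [hV, Submodule.mem_comap, Submodule.mkQ_apply]
      rw [Submodule.Quotient.mk_eq_zero _ |>.mpr hx]
      exact Submodule.zero_mem W'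
    have hWmap : W' = Submodule.map W.mkQ V :=
      (Submodule.map_comap_eq_of_surjective (Submodule.Quotient.mk_surjective W) W').symm
    rcases eq_or_lt_of_le hWV with heq | hlt
    · left
      rw [hWmap, ← heq]
      rw [eq_bot_iff]
      rintro y ⟨x, hx, rfl⟩
      simp only [Submodule.mkQ_apply, Submodule.mem_bot]
      rw [Submodule.Quotient.mk_eq_zero]
      exact hx
    · right
      have : V = ⊤ := hmax V hVstab hlt
      rw [hWmap, this, Submodule.map_top, Submodule.range_mkQ]

end Maximal

section HomGroup

lemma bot_tag (Γ : Type) [AddCommGroup Γ] : @IsTopologicalAddGroup Γ ⊥ _ := by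
  letI : TopologicalSpace Γ := ⊥
  haveI : DiscreteTopology Γ := ⟨rfl⟩
  exact { toContinuousAdd := ⟨continuous_of_discreteTopology⟩,
          toContinuousNeg := ⟨continuous_of_discreteTopology⟩ }

variable {K : Type} [AddCommGroup K] [Module ℤ_[p] K] [TopologicalSpace K]

/-- The continuous equivariant maps as an additive subgroup of the linear maps. -/
def homSubgroup (ρ : Representation ℤ_[p] G K) (N : FinM p G) :
    AddSubgroup (K →ₗ[ℤ_[p]] N.carrier) where
  carrier := {f | (@Continuous K N.carrier _ ⊥ f) ∧ ∀ (g : G) (k : K), f (ρ g k) = N.ρ g (f k)}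
  add_mem' := by
    intro f g hf hg
    letI : TopologicalSpace N.carrier := ⊥
    haveI : IsTopologicalAddGroup N.carrier := bot_tag N.carrier
    refine ⟨?_, fun g' k => ?_⟩
    · have : Continuous fun x : K => f x + g x := hf.1.add hg.1
      exact this
    · simp only [LinearMap.add_apply, hf.2 g' k, hg.2 g' k, map_add]
  zero_mem' := by
    letI : TopologicalSpace N.carrier := ⊥
    refine ⟨?_, fun g' k => by simp⟩
    have : Continuous fun _ : K => (0 : N.carrier) := continuous_const
    exact this
  neg_mem' := by
    intro f hf
    letI : TopologicalSpace N.carrier := ⊥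
    haveI : IsTopologicalAddGroup N.carrier := bot_tag N.carrier
    refine ⟨?_, fun g' k => ?_⟩
    · have : Continuous fun x : K => -(f x) := hf.1.neg
      exact this
    · simp only [LinearMap.neg_apply, hf.2 g' k, map_neg]

def fhomEquivSub (ρ : Representation ℤ_[p] G K) (N : FinM p G) :
    FHom ρ N ≃ ↥(homSubgroup ρ N) :=
  ⟨fun f => ⟨f.1, f.2⟩, fun f => ⟨f.1, f.2⟩, fun _ => rfl, fun _ => rfl⟩

end HomGroup

section PPow

lemma card_pPow_of_nsmul {Γ : Type} [AddCommGroup Γ] [Finite Γ]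
    (h : ∀ x : Γ, ∃ k : ℕ, (p ^ k) • x = (0 : Γ)) : ∃ d : ℕ, Nat.card Γ = p ^ d := by
  have hP : IsPGroup p (Multiplicative Γ) := by
    intro m
    obtain ⟨k, hk⟩ := h m.toAdd
    refine ⟨k, ?_⟩
    have : m ^ (p ^ k) = Multiplicative.ofAdd ((p ^ k) • m.toAdd) := rfl
    rw [this, hk]
    rfl
  obtain ⟨d, hd⟩ := IsPGroup.iff_card.mp hP
  exact ⟨d, (Nat.card_congr (Multiplicative.ofAdd : Γ ≃ Multiplicative Γ)).trans hd⟩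

lemma zp_pPow {Γ : Type} [AddCommGroup Γ] [Module ℤ_[p] Γ] (x : Γ) {k : ℕ}
    (hk : ((p : ℤ_[p]) ^ k) • x = 0) : (p ^ k) • x = 0 := by
  have : (((p ^ k : ℕ)) : ℤ_[p]) • x = (p ^ k) • x := Nat.cast_smul_eq_nsmul _ _ _
  rw [← this]
  push_cast
  exact hk

lemma card_pPow_module {Γ : Type} [AddCommGroup Γ] [Module ℤ_[p] Γ] [Finite Γ] :
    ∃ d : ℕ, Nat.card Γ = p ^ d := by
  apply card_pPow_of_nsmul
  intro x
  obtain ⟨k, hk⟩ := exists_pow_smul_eq_zero (p := p) x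
  exact ⟨k, zp_pPow x hk⟩

lemma lenZ_pPow {α : Type} {d : ℕ} (h : Nat.card α = p ^ d) : lenZ α = d := by
  rw [lenZ, h, (Fact.out : p.Prime).primeFactorsList_pow, List.length_replicate]

end PPow

section CardIrred

variable {A : Type} [AddCommGroup A] [Module ℤ_[p] A] [TopologicalSpace A]
  (ρA : Representation ℤ_[p] G A)

lemma card_hom_irred
    (hdim : ∀ M : IrredMod p G, lenZ (HomGMod p G ρA M) = lenZ M.carrier)
    (M : IrredMod p G) : Nat.card (FHom ρA M.toFinM) = Nat.card M.carrier := by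
  haveI := M.nontrivial
  obtain ⟨d, hd⟩ := card_pPow_module (p := p) (Γ := M.carrier)
  have hd1 : 1 ≤ d := by
    have h2 : 1 < Nat.card M.carrier := Finite.one_lt_card_iff_nontrivial.mpr M.nontrivial
    by_contra h
    push_neg at h
    interval_cases d
    simp at hd
    omega
  have hlen := hdim M
  rw [lenZ_pPow hd] at hlen
  have hcardeq : Nat.card (HomGMod p G ρA M) = Nat.card (FHom ρA M.toFinM) :=
    Nat.card_congr (homGMod_equiv ρA M)
  -- the Hom group is finite
  have hne : Nat.card (HomGMod p G ρA M) ≠ 0 := by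
    intro h0
    rw [lenZ, h0] at hlen
    simp at hlen
    omega
  haveI hfin : Finite (HomGMod p G ρA M) := (Nat.card_ne_zero.mp hne).2
  haveI hfin2 : Finite (FHom ρA M.toFinM) := Finite.of_equiv _ (homGMod_equiv ρA M)
  haveI hfin3 : Finite ↥(homSubgroup ρA M.toFinM) :=
    Finite.of_equiv _ (fhomEquivSub ρA M.toFinM)
  -- the Hom group has p-power cardinality
  obtain ⟨K0, hK0⟩ := exists_pow_smul_eq_zero_uniform (p := p) (Qc := M.carrier)
  obtain ⟨e, he⟩ : ∃ e : ℕ, Nat.card ↥(homSubgroup ρA M.toFinM) = p ^ e := by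
    apply card_pPow_of_nsmul
    intro f
    refine ⟨K0, ?_⟩
    apply Subtype.ext
    show (p ^ K0 • f.1) = (0 : A →ₗ[ℤ_[p]] M.toFinM.carrier)
    apply LinearMap.ext
    intro a
    have h0 : (p ^ K0) • (f.1 a) = 0 := zp_pPow _ (hK0 _)
    simpa using h0
  have hcard2 : Nat.card (HomGMod p G ρA M) = p ^ e := by
    rw [hcardeq, Nat.card_congr (fhomEquivSub ρA M.toFinM), he]
  rw [lenZ_pPow hcard2] at hlen
  rw [hcardeq] at hcard2
  rw [hcard2, hd, hlen]

end CardIrred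

section Devissage

variable [IsTopologicalGroup G]
variable {A : Type} [AddCommGroup A] [Module ℤ_[p] A] [TopologicalSpace A]
  (ρA : Representation ℤ_[p] G A)

/-- Corestriction of a hom landing in a stable submodule. -/
def coresFHom (N : FinM p G) (W : Submodule ℤ_[p] N.carrier) (hW : Stab N.ρ W)
    (d : A →ₗ[ℤ_[p]] N.carrier) (hd : ∀ a, d a ∈ W)
    (hcont : @Continuous A N.carrier _ ⊥ d)
    (hequiv : ∀ (g : G) (k : A), d (ρA g k) = N.ρ g (d k)) : FHom ρA (N.sub W hW) := by
  refine ⟨LinearMap.codRestrict W d hd, ?_, ?_⟩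
  · letI : TopologicalSpace ↥W := ⊥
    haveI : DiscreteTopology ↥W := ⟨rfl⟩
    letI tN : TopologicalSpace N.carrier := ⊥
    haveI : DiscreteTopology N.carrier := ⟨rfl⟩
    rw [continuous_discrete_rng]
    intro b
    have hpre : (⇑(LinearMap.codRestrict W d hd)) ⁻¹' {b} = d ⁻¹' {(b : N.carrier)} := by
      ext a
      simp only [Set.mem_preimage, Set.mem_singleton_iff, Subtype.ext_iff,
        LinearMap.codRestrict_apply]
    rw [hpre]
    exact (continuous_discrete_rng.mp hcont) _
  · intro g k
    apply Subtype.ext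
    show d (ρA g k) = ↑((N.sub W hW).ρ g (LinearMap.codRestrict W d hd k))
    rw [hequiv]
    rfl

@[simp] lemma coresFHom_apply_coe (N : FinM p G) (W : Submodule ℤ_[p] N.carrier)
    (hW : Stab N.ρ W) (d : A →ₗ[ℤ_[p]] N.carrier) (hd : ∀ a, d a ∈ W)
    (hcont : @Continuous A N.carrier _ ⊥ d)
    (hequiv : ∀ (g : G) (k : A), d (ρA g k) = N.ρ g (d k)) (k : A) :
    (((coresFHom ρA N W hW d hd hcont hequiv).1 k : ↥W) : N.carrier) = d k := rfl

/-- Postcomposition with the quotient map. -/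
def theta (N : FinM p G) (W : Submodule ℤ_[p] N.carrier) (hW : Stab N.ρ W)
    (f : FHom ρA N) : FHom ρA (N.quot W hW) := by
  refine ⟨W.mkQ ∘ₗ f.1, ?_, ?_⟩
  · letI tN : TopologicalSpace N.carrier := ⊥
    letI tQ : TopologicalSpace (N.carrier ⧸ W) := ⊥
    have hc : Continuous (⇑W.mkQ ∘ ⇑f.1) := Continuous.comp continuous_bot f.2.1
    simpa [LinearMap.coe_comp] using hc
  · intro g k
    simp only [LinearMap.comp_apply, f.2.2 g k, Submodule.mkQ_apply]
    exact (quotRep_mk N.ρ W hW g (f.1 k)).symm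

lemma theta_surj (hproj : IsProjectiveMod p G ρA) (N : FinM p G)
    (W : Submodule ℤ_[p] N.carrier) (hW : Stab N.ρ W) :
    Function.Surjective (theta ρA N W hW) := by
  intro u
  letI tN : TopologicalSpace N.carrier := ⊥
  haveI : DiscreteTopology N.carrier := ⟨rfl⟩
  letI tQ : TopologicalSpace (N.carrier ⧸ W) := ⊥
  haveI : DiscreteTopology (N.carrier ⧸ W) := ⟨rfl⟩
  obtain ⟨v, hvcont, hvequiv, hveq⟩ := hproj N.carrier N.ρ (finm_profinite N)
    (N.carrier ⧸ W) (N.quot W hW).ρ (finm_profinite (N.quot W hW)) W.mkQ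
    continuous_bot (Submodule.Quotient.mk_surjective W)
    (fun g x => by
      simp only [Submodule.mkQ_apply]
      exact (quotRep_mk N.ρ W hW g x).symm)
    u.1 u.2.1 u.2.2
  exact ⟨⟨v, hvcont, hvequiv⟩, Subtype.ext hveq⟩

/-- Sum of a hom and a hom landing in `W`. -/
def sumFHom (N : FinM p G) (W : Submodule ℤ_[p] N.carrier) (hW : Stab N.ρ W)
    (s : FHom ρA N) (w : FHom ρA (N.sub W hW)) : FHom ρA N := by
  letI tN : TopologicalSpace N.carrier := ⊥
  haveI : DiscreteTopology N.carrier := ⟨rfl⟩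
  haveI : IsTopologicalAddGroup N.carrier := bot_tag N.carrier
  refine ⟨s.1 + W.subtype ∘ₗ w.1, ?_, ?_⟩
  · have hc2 : Continuous fun a : A => ((w.1 a : ↥W) : N.carrier) := by
      rw [continuous_discrete_rng]
      intro b
      letI tW : TopologicalSpace ↥W := ⊥
      haveI : DiscreteTopology ↥W := ⟨rfl⟩
      have hset : (fun a : A => ((w.1 a : ↥W) : N.carrier)) ⁻¹' {b}
          = ⋃ (z : ↥W) (_ : (z : N.carrier) = b), (⇑w.1) ⁻¹' {z} := by
        ext a
        simp only [Set.mem_preimage, Set.mem_singleton_iff, Set.mem_iUnion]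
        constructor
        · intro h; exact ⟨w.1 a, h, rfl⟩
        · rintro ⟨z, hz, h⟩; rw [h]; exact hz
      rw [hset]
      exact isOpen_iUnion fun z => isOpen_iUnion fun _ =>
        (continuous_discrete_rng.mp w.2.1) _
    have hc : Continuous fun a : A => s.1 a + ((w.1 a : ↥W) : N.carrier) :=
      (s.2.1).add hc2
    exact hc
  · intro g k
    simp only [LinearMap.add_apply, LinearMap.comp_apply, Submodule.coe_subtype,
      s.2.2 g k, map_add]
    congr 1
    have hw := w.2.2 g k
    rw [hw]
    rfl

noncomputable def devissageEquiv (hproj : IsProjectiveMod p G ρA) (N : FinM p G)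
    (W : Submodule ℤ_[p] N.carrier) (hW : Stab N.ρ W) :
    FHom ρA N ≃ (FHom ρA (N.quot W hW)) × (FHom ρA (N.sub W hW)) := by
  classical
  choose σ hσ using theta_surj ρA hproj N W hW
  have hσ' : ∀ (u : FHom ρA (N.quot W hW)) (a : A),
      W.mkQ ((σ u).1 a) = u.1 a := by
    intro u a
    have h := congrArg Subtype.val (hσ u)
    exact congrArg (fun (h : A →ₗ[ℤ_[p]] (N.quot W hW).carrier) => h a) h
  have hdiff : ∀ (f s : FHom ρA N), theta ρA N W hW s = theta ρA N W hW f →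
      ∀ a, (f.1 - s.1) a ∈ W := by
    intro f s h a
    have h2 := congrArg (fun (h : FHom ρA (N.quot W hW)) => h.1 a) h
    simp only [theta, LinearMap.comp_apply, Submodule.mkQ_apply] at h2
    rw [LinearMap.sub_apply]
    rw [← Submodule.Quotient.eq]
    exact h2.symm
  letI tN : TopologicalSpace N.carrier := ⊥
  haveI : DiscreteTopology N.carrier := ⟨rfl⟩
  haveI : IsTopologicalAddGroup N.carrier := bot_tag N.carrier
  refine ⟨fun f => (theta ρA N W hW f,
      coresFHom ρA N W hW (f.1 - (σ (theta ρA N W hW f)).1)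
        (hdiff f _ (hσ _)) ((f.2.1).sub ((σ (theta ρA N W hW f)).2.1))
        (fun g k => by
          simp only [LinearMap.sub_apply, f.2.2 g k, (σ (theta ρA N W hW f)).2.2 g k, map_sub])),
    fun uw => sumFHom ρA N W hW (σ uw.1) uw.2, ?_, ?_⟩
  · -- left inverse
    intro f
    apply Subtype.ext
    show (σ (theta ρA N W hW f)).1 + W.subtype ∘ₗ
      (LinearMap.codRestrict W (f.1 - (σ (theta ρA N W hW f)).1) _) = f.1
    apply LinearMap.ext
    intro a
    simp only [LinearMap.add_apply, LinearMap.comp_apply, Submodule.coe_subtype,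
      LinearMap.codRestrict_apply, LinearMap.sub_apply]
    abel
  · -- right inverse
    rintro ⟨u, w⟩
    have h1 : theta ρA N W hW (sumFHom ρA N W hW (σ u) w) = u := by
      apply Subtype.ext
      apply LinearMap.ext
      intro a
      show W.mkQ ((σ u).1 a + ((w.1 a : ↥W) : N.carrier)) = u.1 a
      rw [map_add, hσ' u a]
      have hz : W.mkQ ((w.1 a : ↥W) : N.carrier) = 0 := by
        rw [Submodule.mkQ_apply, Submodule.Quotient.mk_eq_zero]
        exact (w.1 a).2
      rw [hz, add_zero]
    refine Prod.ext ?_ ?_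
    · exact h1
    · apply Subtype.ext
      apply LinearMap.ext
      intro a
      apply Subtype.ext
      show ((sumFHom ρA N W hW (σ u) w).1
          - (σ (theta ρA N W hW (sumFHom ρA N W hW (σ u) w))).1) a
          = ((w.1 a : ↥W) : N.carrier)
      rw [h1]
      show (sumFHom ρA N W hW (σ u) w).1 a - (σ u).1 a = ((w.1 a : ↥W) : N.carrier)
      have hs : (sumFHom ρA N W hW (σ u) w).1 a
          = (σ u).1 a + ((w.1 a : ↥W) : N.carrier) := rfl
      rw [hs]
      abel

end Devissage

section Counting

variable [IsTopologicalGroup G]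
variable {A : Type} [AddCommGroup A] [Module ℤ_[p] A] [TopologicalSpace A]
  (ρA : Representation ℤ_[p] G A)

/-- The zero hom. -/
def zeroFHom {K : Type} [AddCommGroup K] [Module ℤ_[p] K] [TopologicalSpace K]
    (ρ : Representation ℤ_[p] G K) (N : FinM p G) : FHom ρ N := by
  refine ⟨0, ?_, fun g k => by simp⟩
  letI : TopologicalSpace N.carrier := ⊥
  have hc : Continuous fun _ : K => (0 : N.carrier) := continuous_const
  exact hc

lemma card_fhom_subsingleton {K : Type} [AddCommGroup K] [Module ℤ_[p] K] [TopologicalSpace K]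
    (ρ : Representation ℤ_[p] G K) (N : FinM p G) (h : Subsingleton N.carrier) :
    Nat.card (FHom ρ N) = 1 := by
  have hsub : Subsingleton (FHom ρ N) :=
    ⟨fun f g => Subtype.ext (LinearMap.ext fun a => Subsingleton.elim _ _)⟩
  have hne : Nonempty (FHom ρ N) := ⟨zeroFHom ρ N⟩
  exact Nat.card_eq_one_iff_unique.mpr ⟨hsub, hne⟩

lemma card_devissage (hproj : IsProjectiveMod p G ρA) (N : FinM p G)
    (W : Submodule ℤ_[p] N.carrier) (hW : Stab N.ρ W) :
    Nat.card (FHom ρA N)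
      = Nat.card (FHom ρA (N.quot W hW)) * Nat.card (FHom ρA (N.sub W hW)) := by
  rw [Nat.card_congr (devissageEquiv ρA hproj N W hW), Nat.card_prod]

lemma card_sub_lt (N : FinM p G) (W : Submodule ℤ_[p] N.carrier) (hWtop : W ≠ ⊤) :
    Nat.card ↥W < Nat.card N.carrier := by
  have hss : (W : Set N.carrier) ⊂ (Set.univ : Set N.carrier) := by
    rw [Set.ssubset_iff_of_subset (Set.subset_univ _)]
    obtain ⟨x, hx⟩ := SetLike.exists_of_lt (lt_of_le_of_ne (le_top : W ≤ ⊤) hWtop)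
    exact ⟨x, Set.mem_univ x, hx.2⟩
  have := Set.Finite.card_lt_card (Set.toFinite _) hss
  simpa using this

/-- The key counting result: for a projective module `A` with the dimension hypothesis,
`|Hom(A, Q)| = |Q|` for every finite module `Q`. -/
theorem card_fhom_eq (hproj : IsProjectiveMod p G ρA)
    (hdim : ∀ M : IrredMod p G, lenZ (HomGMod p G ρA M) = lenZ M.carrier)
    (N : FinM p G) : Nat.card (FHom ρA N) = Nat.card N.carrier := by
  generalize hn : Nat.card N.carrier = n
  induction n using Nat.strong_induction_on generalizing N with
  | _ n ih =>
  rcases subsingleton_or_nontrivial N.carrier with hs | hnt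
  · rw [card_fhom_subsingleton ρA N hs, ← hn]
    exact (Nat.card_eq_one_iff_unique.mpr ⟨hs, ⟨0⟩⟩).symm
  · obtain ⟨W, hW, hWtop, hmax⟩ := exists_maximal_stab N hnt
    set M : IrredMod p G := maxQuotIrred N W hW hWtop hmax with hM
    have h1 : Nat.card (FHom ρA M.toFinM) = Nat.card M.carrier := card_hom_irred ρA hdim M
    have hMN : Nat.card (FHom ρA (N.quot W hW)) = Nat.card (N.carrier ⧸ W) := h1
    have h2 := card_devissage ρA hproj N W hW
    have h3 : Nat.card (FHom ρA (N.sub W hW)) = Nat.card ↥W := by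
      exact ih (Nat.card ↥W) (hn ▸ card_sub_lt N W hWtop) (N.sub W hW) rfl
    have h4 : Nat.card N.carrier = Nat.card ↥W * Nat.card (N.carrier ⧸ W) :=
      Submodule.card_eq_card_quotient_mul_card W
    rw [h2, hMN, h3, ← hn, h4]
    ring

end Counting

section CountingR

variable [IsTopologicalGroup G]
variable {R : Type} [AddCommGroup R] [Module ℤ_[p] R] [TopologicalSpace R]
  (ρR : Representation ℤ_[p] G R) (e : R)

theorem card_fhomR (hfree : IsFreeOfRankOne p G ρR e) (N : FinM p G) :
    Nat.card (FHom ρR N) = Nat.card N.carrier := by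
  letI : TopologicalSpace N.carrier := ⊥
  have hfr := hfree N.carrier N.ρ (finm_profinite N)
  have hbij : Function.Bijective (fun f : FHom ρR N => f.1 e) := by
    constructor
    · intro f g hfg
      have h1 := (hfr (f.1 e)).unique (y₁ := f.1) (y₂ := g.1)
        ⟨⟨f.2.1, f.2.2⟩, rfl⟩ ⟨⟨g.2.1, g.2.2⟩, hfg.symm⟩
      exact Subtype.ext h1
    · intro k
      obtain ⟨φ, ⟨⟨hc, he⟩, hval⟩, _⟩ := hfr k
      exact ⟨⟨φ, hc, he⟩, hval⟩
  exact Nat.card_eq_of_bijective _ hbij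

end CountingR

section Surjections

variable [IsTopologicalGroup G]

/-- Surjective continuous equivariant homs. -/
def FSurj {K : Type} [AddCommGroup K] [Module ℤ_[p] K] [TopologicalSpace K]
    (ρ : Representation ℤ_[p] G K) (N : FinM p G) : Type :=
  {f : FHom ρ N // Function.Surjective ⇑f.1}

variable {K : Type} [AddCommGroup K] [Module ℤ_[p] K] [TopologicalSpace K]
  (ρ : Representation ℤ_[p] G K)

lemma range_stab (N : FinM p G) (f : FHom ρ N) : Stab N.ρ (LinearMap.range f.1) := by
  rintro g x ⟨k, rfl⟩
  exact ⟨ρ g k, f.2.2 g k⟩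

lemma submodule_finite (N : FinM p G) : Finite (Submodule ℤ_[p] N.carrier) :=
  Finite.of_injective _ SetLike.coe_injective

def fiberEquivSurj (N : FinM p G) (W : Submodule ℤ_[p] N.carrier) (hW : Stab N.ρ W) :
    {f : FHom ρ N // LinearMap.range f.1 = W} ≃ FSurj ρ (N.sub W hW) where
  toFun fh :=
    ⟨coresFHom ρ N W hW fh.1.1 (fun a => by
        have hm : (fh.1.1 a) ∈ LinearMap.range fh.1.1 := LinearMap.mem_range_self _ a
        rwa [fh.2] at hm)
      fh.1.2.1 fh.1.2.2, by
        rintro ⟨y, hy⟩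
        rw [← fh.2] at hy
        obtain ⟨k, hk⟩ := hy
        exact ⟨k, Subtype.ext hk⟩⟩
  invFun s :=
    ⟨⟨W.subtype ∘ₗ s.1.1, by
        letI : TopologicalSpace N.carrier := ⊥
        letI : TopologicalSpace ↥W := ⊥
        have hc : Continuous (⇑W.subtype ∘ ⇑s.1.1) := Continuous.comp continuous_bot s.1.2.1
        simpa [LinearMap.coe_comp] using hc, by
        intro g k
        simp only [LinearMap.comp_apply, Submodule.coe_subtype, s.1.2.2 g k]
        rfl⟩, by
      have h1 : LinearMap.range s.1.1 = ⊤ := LinearMap.range_eq_top.mpr s.2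
      rw [LinearMap.range_comp, h1, Submodule.map_subtype_top]⟩
  left_inv fh := by
    apply Subtype.ext
    apply Subtype.ext
    apply LinearMap.ext
    intro a
    rfl
  right_inv s := by
    apply Subtype.ext
    apply Subtype.ext
    apply LinearMap.ext
    intro a
    apply Subtype.ext
    rfl

lemma nat_card_sigma {ι : Type} [Fintype ι] (g : ι → Type) [∀ i, Finite (g i)] :
    Nat.card (Σ i, g i) = ∑ i, Nat.card (g i) := by
  haveI : ∀ i, Fintype (g i) := fun i => Fintype.ofFinite _
  simp [Nat.card_eq_fintype_card, Fintype.card_sigma]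

lemma card_fhom_partition (N : FinM p G) [Finite (FHom ρ N)]
    [Fintype (Submodule ℤ_[p] N.carrier)] :
    Nat.card (FHom ρ N)
      = ∑ W : Submodule ℤ_[p] N.carrier,
          Nat.card {f : FHom ρ N // LinearMap.range f.1 = W} := by
  rw [Nat.card_congr (Equiv.sigmaFiberEquiv fun f : FHom ρ N => LinearMap.range f.1).symm]
  exact nat_card_sigma _

def fiberTopEquiv (N : FinM p G) :
    {f : FHom ρ N // LinearMap.range f.1 = ⊤} ≃ FSurj ρ N :=
  Equiv.subtypeEquivRight fun f => LinearMap.range_eq_top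

end Surjections

section SurjCount

variable [IsTopologicalGroup G]
variable {A : Type} [AddCommGroup A] [Module ℤ_[p] A] [TopologicalSpace A]
  (ρA : Representation ℤ_[p] G A)
variable {R : Type} [AddCommGroup R] [Module ℤ_[p] R] [TopologicalSpace R]
  (ρR : Representation ℤ_[p] G R) (e : R)

theorem card_fsurj_eq (hproj : IsProjectiveMod p G ρA)
    (hdim : ∀ M : IrredMod p G, lenZ (HomGMod p G ρA M) = lenZ M.carrier)
    (hfree : IsFreeOfRankOne p G ρR e) (N : FinM p G) :
    Nat.card (FSurj ρA N) = Nat.card (FSurj ρR N) := by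
  generalize hn : Nat.card N.carrier = n
  induction n using Nat.strong_induction_on generalizing N with
  | _ n ih =>
  classical
  haveI : Finite (Submodule ℤ_[p] N.carrier) := submodule_finite N
  haveI : Fintype (Submodule ℤ_[p] N.carrier) := Fintype.ofFinite _
  have hA := card_fhom_eq ρA hproj hdim N
  have hR := card_fhomR ρR e hfree N
  have hcne : Nat.card N.carrier ≠ 0 := Nat.card_ne_zero.mpr ⟨⟨0⟩, inferInstance⟩
  haveI finA : Finite (FHom ρA N) := (Nat.card_ne_zero.mp (by rw [hA]; exact hcne)).2
  haveI finR : Finite (FHom ρR N) := (Nat.card_ne_zero.mp (by rw [hR]; exact hcne)).2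
  have hpartA := card_fhom_partition ρA N
  have hpartR := card_fhom_partition ρR N
  have hterm : ∀ W : Submodule ℤ_[p] N.carrier, W ≠ ⊤ →
      Nat.card {f : FHom ρA N // LinearMap.range f.1 = W}
        = Nat.card {f : FHom ρR N // LinearMap.range f.1 = W} := by
    intro W hWtop
    by_cases hst : Stab N.ρ W
    · rw [Nat.card_congr (fiberEquivSurj ρA N W hst), Nat.card_congr (fiberEquivSurj ρR N W hst)]
      exact ih (Nat.card ↥W) (hn ▸ card_sub_lt N W hWtop) (N.sub W hst) rfl
    · haveI e1 : IsEmpty {f : FHom ρA N // LinearMap.range f.1 = W} :=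
        ⟨fun fh => hst (fh.2 ▸ range_stab ρA N fh.1)⟩
      haveI e2 : IsEmpty {f : FHom ρR N // LinearMap.range f.1 = W} :=
        ⟨fun fh => hst (fh.2 ▸ range_stab ρR N fh.1)⟩
      rw [Nat.card_of_isEmpty, Nat.card_of_isEmpty]
  set gA : Submodule ℤ_[p] N.carrier → ℕ :=
    fun W => Nat.card {f : FHom ρA N // LinearMap.range f.1 = W} with hgA
  set gR : Submodule ℤ_[p] N.carrier → ℕ :=
    fun W => Nat.card {f : FHom ρR N // LinearMap.range f.1 = W} with hgR
  have hsplitA : gA ⊤ + ∑ W ∈ Finset.univ.erase ⊤, gA W = ∑ W, gA W :=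
    Finset.add_sum_erase _ gA (Finset.mem_univ ⊤)
  have hsplitR : gR ⊤ + ∑ W ∈ Finset.univ.erase ⊤, gR W = ∑ W, gR W :=
    Finset.add_sum_erase _ gR (Finset.mem_univ ⊤)
  have hrest : ∑ W ∈ Finset.univ.erase ⊤, gA W = ∑ W ∈ Finset.univ.erase ⊤, gR W :=
    Finset.sum_congr rfl fun W hW => hterm W (Finset.ne_of_mem_erase hW)
  have htot : ∑ W, gA W = ∑ W, gR W := by
    rw [hgA, hgR, ← hpartA, ← hpartR, hA, hR]
  have hmain : gA ⊤ = gR ⊤ := by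
    have hh := hsplitA.trans (htot.trans hsplitR.symm)
    rw [hrest] at hh
    exact Nat.add_right_cancel hh
  rw [← Nat.card_congr (fiberTopEquiv ρA N), ← Nat.card_congr (fiberTopEquiv ρR N)]
  exact hmain

end SurjCount

section ProfiniteMod

variable [IsTopologicalGroup G] [CompactSpace G]
variable {K : Type} [AddCommGroup K] [Module ℤ_[p] K] [TopologicalSpace K]
  (ρ : Representation ℤ_[p] G K)

lemma smul_mem_of_closed [IsTopologicalAddGroup K] [ContinuousSMul ℤ_[p] K]
    {H : AddSubgroup K} (hH : IsClosed (H : Set K)) (c : ℤ_[p]) {x : K} (hx : x ∈ H) :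
    c • x ∈ H := by
  have hcont : Continuous fun t : ℤ_[p] => t • x := continuous_id.smul continuous_const
  have hclosed : IsClosed {t : ℤ_[p] | t • x ∈ H} := hH.preimage hcont
  have hsub : Set.range (Int.cast : ℤ → ℤ_[p]) ⊆ {t : ℤ_[p] | t • x ∈ H} := by
    rintro t ⟨n, rfl⟩
    simp only [Set.mem_setOf_eq, Int.cast_smul_eq_zsmul]
    exact zsmul_mem hx n
  have hdense := PadicInt.denseRange_intCast (p := p)
  have : (Set.univ : Set ℤ_[p]) ⊆ {t : ℤ_[p] | t • x ∈ H} := by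
    rw [← hdense.closure_range]
    exact closure_minimal hsub hclosed
  exact this (Set.mem_univ c)

lemma exists_open_stab_submodule (inst : ProfiniteZpGModule p G K ρ)
    {V : Set K} (hV : V ∈ nhds (0 : K)) :
    ∃ U : Submodule ℤ_[p] K, Stab ρ U ∧ IsOpen (U : Set K) ∧ (U : Set K) ⊆ V := by
  haveI := inst.compact
  haveI := inst.t2
  haveI := inst.td
  haveI := inst.addGroup
  haveI := inst.contSMul
  obtain ⟨O, hOV, hOopen, hO0⟩ := mem_nhds_iff.mp hV
  obtain ⟨C, hCclopen, hC0, hCO⟩ := compact_exists_isClopen_in_isOpen hOopen hO0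
  obtain ⟨H, hH⟩ :=
    IsTopologicalAddGroup.exist_openAddSubgroup_sub_clopen_nhds_of_zero hCclopen hC0
  have hHclosed : IsClosed (H.toAddSubgroup : Set K) := H.isClosed
  refine ⟨{ carrier := {x : K | ∀ g : G, ρ g x ∈ H.toAddSubgroup}
            add_mem' := fun hx hy g => by
              rw [map_add]
              exact add_mem (hx g) (hy g)
            zero_mem' := fun g => by
              rw [map_zero]
              exact zero_mem _
            smul_mem' := fun c x hx g => by
              rw [map_smul]
              exact smul_mem_of_closed hHclosed c (hx g) }, ?_, ?_, ?_⟩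
  · intro g x hx g'
    show ρ g' (ρ g x) ∈ H.toAddSubgroup
    rw [← rep_mul_apply]
    exact hx (g' * g)
  · -- openness
    have hcompl : {x : K | ∀ g : G, ρ g x ∈ H.toAddSubgroup}ᶜ
        = Prod.snd '' ({q : G × K | ρ q.1 q.2 ∈ H.toAddSubgroup}ᶜ) := by
      ext x
      simp only [Set.mem_compl_iff, Set.mem_setOf_eq, not_forall, Set.mem_image, Prod.exists]
      constructor
      · rintro ⟨g, hg⟩; exact ⟨g, x, hg, rfl⟩
      · rintro ⟨g, y, hg, rfl⟩; exact ⟨g, hg⟩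
    have hS : IsOpen {q : G × K | ρ q.1 q.2 ∈ H.toAddSubgroup} :=
      H.isOpen.preimage inst.contAction
    have hclosed : IsClosed ({x : K | ∀ g : G, ρ g x ∈ H.toAddSubgroup}ᶜ) := by
      rw [hcompl]
      exact isClosedMap_snd_of_compactSpace _ hS.isClosed_compl
    have := isClosed_compl_iff.mp hclosed
    exact this
  · -- subset
    intro x hx
    have h1 : ρ 1 x ∈ H.toAddSubgroup := hx 1
    rw [map_one] at h1
    exact hOV (hCO (hH h1))

lemma exists_open_stab_submodule_notmem (inst : ProfiniteZpGModule p G K ρ)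
    {x : K} (hx : x ≠ 0) :
    ∃ U : Submodule ℤ_[p] K, Stab ρ U ∧ IsOpen (U : Set K) ∧ x ∉ U := by
  haveI := inst.t2
  have hV : ({x}ᶜ : Set K) ∈ nhds (0 : K) :=
    IsOpen.mem_nhds isOpen_compl_singleton (by simp [hx.symm])
  obtain ⟨U, h1, h2, h3⟩ := exists_open_stab_submodule ρ inst hV
  exact ⟨U, h1, h2, fun hmem => (h3 hmem) rfl⟩

lemma quot_finite (inst : ProfiniteZpGModule p G K ρ) (U : Submodule ℤ_[p] K)
    (hUo : IsOpen (U : Set K)) : Finite (K ⧸ U) := by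
  haveI := inst.compact
  haveI := inst.addGroup
  exact AddSubgroup.quotient_finite_of_isOpen U.toAddSubgroup hUo

/-- The finite quotient of a profinite module by an open stable submodule. -/
@[reducible] def profQuot (inst : ProfiniteZpGModule p G K ρ) (U : Submodule ℤ_[p] K)
    (hU : Stab ρ U) (hUo : IsOpen (U : Set K)) : FinM p G where
  carrier := K ⧸ U
  finite := quot_finite ρ inst U hUo
  ρ := quotRep ρ U hU
  cont a := by
    haveI := inst.addGroup
    obtain ⟨x, rfl⟩ := Submodule.Quotient.mk_surjective U a
    have hset : {g : G | quotRep ρ U hU g (Submodule.Quotient.mk x) = Submodule.Quotient.mk x}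
        = (fun g : G => ρ g x) ⁻¹' {y : K | y - x ∈ U} := by
      ext g
      simp only [Set.mem_setOf_eq, Set.mem_preimage, quotRep_mk]
      exact Submodule.Quotient.eq U
    rw [hset]
    have hcont : Continuous fun g : G => ρ g x :=
      inst.contAction.comp (continuous_id.prodMk continuous_const)
    have hopen : IsOpen {y : K | y - x ∈ U} :=
      hUo.preimage (continuous_id.sub continuous_const)
    exact hopen.preimage hcont

lemma mkQ_cont_bot (inst : ProfiniteZpGModule p G K ρ) (U : Submodule ℤ_[p] K)
    (hUo : IsOpen (U : Set K)) :
    @Continuous K (K ⧸ U) _ ⊥ (⇑U.mkQ) := by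
  haveI := inst.addGroup
  letI : TopologicalSpace (K ⧸ U) := ⊥
  haveI : DiscreteTopology (K ⧸ U) := ⟨rfl⟩
  rw [continuous_discrete_rng]
  intro b
  obtain ⟨x, rfl⟩ := Submodule.Quotient.mk_surjective U b
  have hset : (⇑U.mkQ) ⁻¹' {Submodule.Quotient.mk x} = {y : K | y - x ∈ U} := by
    ext y
    simp only [Set.mem_preimage, Set.mem_singleton_iff, Submodule.mkQ_apply, Set.mem_setOf_eq]
    exact Submodule.Quotient.eq U
  rw [hset]
  exact hUo.preimage (continuous_id.sub continuous_const)

/-- The quotient map as a surjective element of `FSurj`. -/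
def profQuotSurj (inst : ProfiniteZpGModule p G K ρ) (U : Submodule ℤ_[p] K)
    (hU : Stab ρ U) (hUo : IsOpen (U : Set K)) : FSurj ρ (profQuot ρ inst U hU hUo) :=
  ⟨⟨U.mkQ, mkQ_cont_bot ρ inst U hUo, fun g k => by
      simp only [Submodule.mkQ_apply]
      exact (quotRep_mk ρ U hU g k).symm⟩,
    Submodule.Quotient.mk_surjective U⟩

end ProfiniteMod

end

end Stmt9aux

open scoped Pointwise

theorem stmt9 {p : ℕ} [Fact p.Prime] {G : Type} [Group G] [TopologicalSpace G]
    [IsTopologicalGroup G] [CompactSpace G] [TotallyDisconnectedSpace G] [T2Space G]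
    (A : Type) [AddCommGroup A] [Module ℤ_[p] A] [TopologicalSpace A]
    (ρA : Representation ℤ_[p] G A) [ProfiniteZpGModule p G A ρA]
    (hproj : IsProjectiveMod p G ρA)
    (hdim : ∀ M : IrredMod p G, lenZ (HomGMod p G ρA M) = lenZ M.carrier)
    (R : Type) [AddCommGroup R] [Module ℤ_[p] R] [TopologicalSpace R]
    (ρR : Representation ℤ_[p] G R) [ProfiniteZpGModule p G R ρR]
    (e : R) (hfree : IsFreeOfRankOne p G ρR e) :
    ∃ φ : A ≃ₗ[ℤ_[p]] R, Continuous φ ∧ Continuous φ.symm ∧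
      ∀ (g : G) (a : A), φ (ρA g a) = ρR g (φ a) := by
  classical
  open Stmt9aux in
  have instA : ProfiniteZpGModule p G A ρA := inferInstance
  have instR : ProfiniteZpGModule p G R ρR := inferInstance
  haveI hAcompact := instA.compact
  haveI hAt2 := instA.t2
  haveI hAtag := instA.addGroup
  haveI hRcompact := instR.compact
  haveI hRt2 := instR.t2
  haveI hRtag := instR.addGroup
  -- Step 1: select a topological generator `a` of `A`
  set ι := {U : Submodule ℤ_[p] A // Stab ρA U ∧ IsOpen (U : Set A)} with hι
  haveI : Nonempty ι := ⟨⟨⊤, fun _ _ _ => trivial, by rw [Submodule.top_coe]; exact isOpen_univ⟩⟩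
  set Q : ι → FinM p G := fun U => profQuot ρA instA U.1 U.2.1 U.2.2 with hQ
  have hfinFR : ∀ U : ι, Finite (FHom ρR (Q U)) := by
    intro U
    have h := card_fhomR ρR e hfree (Q U)
    have hcne : Nat.card (Q U).carrier ≠ 0 :=
      Nat.card_ne_zero.mpr ⟨⟨0⟩, (Q U).finite⟩
    exact (Nat.card_ne_zero.mp (by rw [h]; exact hcne)).2
  have hfinSR : ∀ U : ι, Finite (FSurj ρR (Q U)) := by
    intro U
    haveI := hfinFR U
    exact Subtype.finite
  have hnonS : ∀ U : ι, Nonempty (FSurj ρR (Q U)) := by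
    intro U
    have hcount := card_fsurj_eq ρA ρR e hproj hdim hfree (Q U)
    have hAex : Nonempty (FSurj ρA (Q U)) := ⟨profQuotSurj ρA instA U.1 U.2.1 U.2.2⟩
    have hfinFA : Finite (FHom ρA (Q U)) := by
      have h := card_fhom_eq ρA hproj hdim (Q U)
      have hcne : Nat.card (Q U).carrier ≠ 0 :=
        Nat.card_ne_zero.mpr ⟨⟨0⟩, (Q U).finite⟩
      exact (Nat.card_ne_zero.mp (by rw [h]; exact hcne)).2
    haveI : Finite (FSurj ρA (Q U)) := Subtype.finite
    have hpos : Nat.card (FSurj ρA (Q U)) ≠ 0 :=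
      Nat.card_ne_zero.mpr ⟨hAex, inferInstance⟩
    rw [hcount] at hpos
    exact (Nat.card_ne_zero.mp hpos).1
  set S : ι → Set A :=
    fun U => {a : A | ∃ f : FSurj ρR (Q U), f.1.1 e = Submodule.Quotient.mk a} with hSdef
  have hSclosed : ∀ U : ι, IsClosed (S U) := by
    intro U
    haveI := hfinSR U
    have hset : S U = ⋃ f : FSurj ρR (Q U),
        {a : A | (Submodule.Quotient.mk a : A ⧸ U.1) = f.1.1 e} := by
      ext a
      simp only [hSdef, Set.mem_setOf_eq, Set.mem_iUnion]
      constructor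
      · rintro ⟨f, hf⟩; exact ⟨f, hf.symm⟩
      · rintro ⟨f, hf⟩; exact ⟨f, hf.symm⟩
    rw [hset]
    apply isClosed_iUnion_of_finite
    intro f
    letI : TopologicalSpace (A ⧸ U.1) := ⊥
    haveI : DiscreteTopology (A ⧸ U.1) := ⟨rfl⟩
    have hc := mkQ_cont_bot ρA instA U.1 U.2.2
    have : {a : A | (Submodule.Quotient.mk a : A ⧸ U.1) = f.1.1 e}
        = (⇑U.1.mkQ) ⁻¹' {f.1.1 e} := by
      ext a
      simp [Submodule.mkQ_apply]
    rw [this]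
    exact (isClosed_discrete _).preimage hc
  have hSnon : ∀ U : ι, (S U).Nonempty := by
    intro U
    obtain ⟨f⟩ := hnonS U
    obtain ⟨a, ha⟩ := Submodule.Quotient.mk_surjective U.1 (f.1.1 e)
    exact ⟨a, f, ha.symm⟩
  have hmono : ∀ (U V : ι), V.1 ≤ U.1 → S V ⊆ S U := by
    rintro U V hle a ⟨f, hf⟩
    letI : TopologicalSpace (A ⧸ V.1) := ⊥
    haveI : DiscreteTopology (A ⧸ V.1) := ⟨rfl⟩
    letI : TopologicalSpace (A ⧸ U.1) := ⊥
    haveI : DiscreteTopology (A ⧸ U.1) := ⟨rfl⟩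
    set π : (A ⧸ V.1) →ₗ[ℤ_[p]] (A ⧸ U.1) :=
      Submodule.mapQ V.1 U.1 LinearMap.id (fun x hx => hle hx) with hπ
    have hπmk : ∀ x : A, π (Submodule.Quotient.mk x) = Submodule.Quotient.mk x := by
      intro x
      simp [hπ, Submodule.mapQ_apply]
    have hπsurj : Function.Surjective ⇑π := by
      intro b
      obtain ⟨x, rfl⟩ := Submodule.Quotient.mk_surjective U.1 b
      exact ⟨Submodule.Quotient.mk x, hπmk x⟩
    refine ⟨⟨⟨π ∘ₗ f.1.1, ?_, ?_⟩, hπsurj.comp f.2⟩, ?_⟩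
    · have hc : Continuous (⇑π ∘ ⇑f.1.1) := Continuous.comp continuous_bot f.1.2.1
      simpa [LinearMap.coe_comp] using hc
    · intro g r
      simp only [LinearMap.comp_apply, f.1.2.2 g r]
      show π (quotRep ρA V.1 V.2.1 g (f.1.1 r)) = quotRep ρA U.1 U.2.1 g (π (f.1.1 r))
      obtain ⟨x, hx⟩ := Submodule.Quotient.mk_surjective V.1 (f.1.1 r)
      rw [← hx, quotRep_mk, hπmk, hπmk, quotRep_mk]
    · show π (f.1.1 e) = Submodule.Quotient.mk a
      rw [hf, hπmk]
  have hdir : Directed (fun s t : Set A => s ⊇ t) S := by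
    intro U V
    refine ⟨⟨U.1 ⊓ V.1, fun g x hx => ?_, ?_⟩, ?_, ?_⟩
    · rw [Submodule.mem_inf] at hx ⊢
      exact ⟨U.2.1 g x hx.1, V.2.1 g x hx.2⟩
    · rw [Submodule.coe_inf]
      exact U.2.2.inter V.2.2
    · exact hmono U _ inf_le_left
    · exact hmono V _ inf_le_right
  obtain ⟨a, ha⟩ := IsCompact.nonempty_iInter_of_directed_nonempty_isCompact_isClosed
    S hdir hSnon (fun U => (hSclosed U).isCompact) hSclosed
  simp only [Set.mem_iInter] at ha
  -- Step 2: the canonical map `φ₀ : R → A` with `φ₀ e = a` is surjective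
  obtain ⟨φ₀, ⟨⟨hφ₀c, hφ₀e⟩, hφ₀val⟩, _⟩ := hfree A ρA instA a
  have hφ₀surj : Function.Surjective ⇑φ₀ := by
    have hclosed : IsClosed (Set.range ⇑φ₀) := (isCompact_range hφ₀c).isClosed
    intro x
    have hx : x ∈ closure (Set.range ⇑φ₀) := by
      rw [mem_closure_iff]
      intro O hOopen hxO
      have hVnhds : {y : A | x + y ∈ O} ∈ nhds (0 : A) := by
        apply IsOpen.mem_nhds
        · exact hOopen.preimage (continuous_const.add continuous_id)
        · simpa using hxO
      obtain ⟨U, hUstab, hUopen, hUsub⟩ := exists_open_stab_submodule ρA instA hVnhds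
      set Uel : ι := ⟨U, hUstab, hUopen⟩ with hUel
      obtain ⟨f, hf⟩ := ha Uel
      letI : TopologicalSpace (A ⧸ U) := ⊥
      haveI : DiscreteTopology (A ⧸ U) := ⟨rfl⟩
      have huniq := hfree (A ⧸ U) (quotRep ρA U hUstab) (finm_profinite (Q Uel))
        (Submodule.Quotient.mk a)
      have h1 : U.mkQ ∘ₗ φ₀ = f.1.1 := by
        have hc1 : (Continuous (⇑(U.mkQ ∘ₗ φ₀)) ∧ ∀ (g : G) (r : R),
            (U.mkQ ∘ₗ φ₀) (ρR g r) = quotRep ρA U hUstab g ((U.mkQ ∘ₗ φ₀) r))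
            ∧ (U.mkQ ∘ₗ φ₀) e = Submodule.Quotient.mk a := by
          refine ⟨⟨?_, ?_⟩, ?_⟩
          · have hc : Continuous (⇑U.mkQ ∘ ⇑φ₀) :=
              Continuous.comp (mkQ_cont_bot ρA instA U hUopen) hφ₀c
            simpa [LinearMap.coe_comp] using hc
          · intro g r
            simp only [LinearMap.comp_apply, hφ₀e g r, Submodule.mkQ_apply, quotRep_mk]
          · simp [hφ₀val]
        have hc2 : (Continuous (⇑f.1.1) ∧ ∀ (g : G) (r : R),
            f.1.1 (ρR g r) = quotRep ρA U hUstab g (f.1.1 r))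
            ∧ f.1.1 e = Submodule.Quotient.mk a := ⟨⟨f.1.2.1, f.1.2.2⟩, hf⟩
        exact (huniq.unique hc1 hc2)
      obtain ⟨r, hr⟩ := f.2 (Submodule.Quotient.mk x)
      have hrx : U.mkQ (φ₀ r) = Submodule.Quotient.mk x := by
        rw [← hr, ← h1]; rfl
      have hmem : φ₀ r - x ∈ U := by
        rwa [Submodule.mkQ_apply, Submodule.Quotient.eq] at hrx
      refine ⟨φ₀ r, ?_, Set.mem_range_self r⟩
      have := hUsub hmem
      simpa using this
    rwa [hclosed.closure_eq] at hx
  -- Step 3: lift the identity through `φ₀`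
  obtain ⟨v, hvc, hvequiv, hveq⟩ := hproj R ρR instR A ρA instA φ₀ hφ₀c hφ₀surj hφ₀e
    LinearMap.id continuous_id (fun g x => rfl)
  have hφ₀v : ∀ x : A, φ₀ (v x) = x := fun x => LinearMap.congr_fun hveq x
  -- Step 4: `v` is surjective
  have hvsurj : Function.Surjective ⇑v := by
    rw [← LinearMap.range_eq_top]
    by_contra hne
    obtain ⟨x, _, hxC⟩ := SetLike.exists_of_lt
      (lt_of_le_of_ne (le_top : LinearMap.range v ≤ ⊤) hne)
    set C := LinearMap.range v with hC
    have hCcompact : IsCompact (C : Set R) := by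
      have : (C : Set R) = Set.range ⇑v := by
        ext y; simp [hC, LinearMap.mem_range]
      rw [this]
      exact isCompact_range hvc
    have hsub : (C : Set R) ⊆ {x}ᶜ := by
      intro y hy h1
      simp only [Set.mem_singleton_iff] at h1
      exact hxC (h1 ▸ hy)
    obtain ⟨V, hVnhds, hCV⟩ :=
      compact_open_separated_add_right hCcompact isOpen_compl_singleton hsub
    obtain ⟨U, hUstab, hUopen, hUsub⟩ := exists_open_stab_submodule ρR instR hVnhds
    set D := C ⊔ U with hD
    have hxD : x ∉ D := by
      intro hmem
      obtain ⟨y, hy, z, hz, hyz⟩ := Submodule.mem_sup.mp hmem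
      have : x ∈ (C : Set R) + V := ⟨y, hy, z, hUsub hz, hyz⟩
      exact (hCV this) rfl
    have hDstab : Stab ρR D := by
      intro g y hy
      obtain ⟨y1, hy1, y2, hy2, hyy⟩ := Submodule.mem_sup.mp hy
      rw [← hyy, map_add]
      apply Submodule.add_mem_sup
      · obtain ⟨r, rfl⟩ := hy1
        exact ⟨ρA g r, hvequiv g r⟩
      · exact hUstab g y2 hy2
    have hDopen : IsOpen (D : Set R) := by
      have hle : U.toAddSubgroup ≤ D.toAddSubgroup := fun y hy =>
        Submodule.mem_sup_right hy
      exact AddSubgroup.isOpen_mono hle hUopen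
    set QD := profQuot ρR instR D hDstab hDopen with hQD
    have hQDnt : Nontrivial QD.carrier :=
      ⟨Submodule.Quotient.mk x, 0, by
        rw [Ne, Submodule.Quotient.mk_eq_zero]
        exact hxD⟩
    obtain ⟨W, hWst, hWtop, hWmax⟩ := exists_maximal_stab QD hQDnt
    set M := maxQuotIrred QD W hWst hWtop hWmax with hM
    -- the nonzero hom `w : R → M` vanishing on `C`
    letI : TopologicalSpace QD.carrier := ⊥
    haveI : DiscreteTopology QD.carrier := ⟨rfl⟩
    letI : TopologicalSpace M.carrier := ⊥
    haveI : DiscreteTopology M.carrier := ⟨rfl⟩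
    set w : FHom ρR M.toFinM := ⟨W.mkQ ∘ₗ D.mkQ, by
      have hc : @Continuous R M.carrier _ ⊥ (⇑W.mkQ ∘ ⇑D.mkQ) :=
        Continuous.comp continuous_bot (mkQ_cont_bot ρR instR D hDopen)
      exact hc, by
      intro g r
      show W.mkQ (D.mkQ (ρR g r)) = M.ρ g (W.mkQ (D.mkQ r))
      have hRHS : M.ρ g (W.mkQ (D.mkQ r))
          = Submodule.Quotient.mk (quotRep ρR D hDstab g (Submodule.Quotient.mk r)) := by
        simp only [Submodule.mkQ_apply]
        exact quotRep_mk (quotRep ρR D hDstab) W hWst g (Submodule.Quotient.mk r)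
      rw [hRHS, quotRep_mk]
      simp [Submodule.mkQ_apply]⟩ with hw
    -- restriction along `v`
    set Φ : FHom ρR M.toFinM → FHom ρA M.toFinM := fun u' => ⟨u'.1 ∘ₗ v, by
        have hc : Continuous (⇑u'.1 ∘ ⇑v) := Continuous.comp u'.2.1 hvc
        simpa [LinearMap.coe_comp] using hc, by
        intro g x'
        simp only [LinearMap.comp_apply, hvequiv g x', u'.2.2 g (v x')]⟩ with hΦ
    have hΦsurj : Function.Surjective Φ := by
      intro u'
      refine ⟨⟨u'.1 ∘ₗ φ₀, ?_, ?_⟩, ?_⟩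
      · have hc : Continuous (⇑u'.1 ∘ ⇑φ₀) := Continuous.comp u'.2.1 hφ₀c
        simpa [LinearMap.coe_comp] using hc
      · intro g r
        simp only [LinearMap.comp_apply, hφ₀e g r, u'.2.2 g (φ₀ r)]
      · apply Subtype.ext
        show (u'.1 ∘ₗ φ₀) ∘ₗ v = u'.1
        rw [LinearMap.comp_assoc, hveq, LinearMap.comp_id]
    have hcA : Nat.card (FHom ρA M.toFinM) = Nat.card M.carrier :=
      card_hom_irred ρA hdim M
    have hcR : Nat.card (FHom ρR M.toFinM) = Nat.card M.carrier :=
      card_fhomR ρR e hfree M.toFinM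
    have hMne : Nat.card M.carrier ≠ 0 := Nat.card_ne_zero.mpr ⟨⟨0⟩, M.finite⟩
    haveI hfA : Finite (FHom ρA M.toFinM) :=
      (Nat.card_ne_zero.mp (by rw [hcA]; exact hMne)).2
    haveI hfR : Finite (FHom ρR M.toFinM) :=
      (Nat.card_ne_zero.mp (by rw [hcR]; exact hMne)).2
    haveI := Fintype.ofFinite (FHom ρA M.toFinM)
    haveI := Fintype.ofFinite (FHom ρR M.toFinM)
    have hcardeq : Fintype.card (FHom ρR M.toFinM) = Fintype.card (FHom ρA M.toFinM) := by
      rw [← Nat.card_eq_fintype_card, ← Nat.card_eq_fintype_card, hcA, hcR]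
    have hΦinj : Function.Injective Φ :=
      ((Fintype.bijective_iff_surjective_and_card Φ).mpr ⟨hΦsurj, hcardeq⟩).1
    have hΦw : Φ w = Φ (zeroFHom ρR M.toFinM) := by
      apply Subtype.ext
      apply LinearMap.ext
      intro x'
      have hvC : v x' ∈ D := Submodule.mem_sup_left ⟨x', rfl⟩
      have h0 : D.mkQ (v x') = 0 := by
        rw [Submodule.mkQ_apply, Submodule.Quotient.mk_eq_zero]
        exact hvC
      show W.mkQ (D.mkQ (v x')) = (0 : R →ₗ[ℤ_[p]] M.toFinM.carrier) (v x')
      rw [h0, map_zero]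
      rfl
    have hwzero : w = zeroFHom ρR M.toFinM := hΦinj hΦw
    obtain ⟨z, hz⟩ := SetLike.exists_of_lt (lt_of_le_of_ne (le_top : W ≤ ⊤) hWtop)
    obtain ⟨r0, hr0⟩ := Submodule.Quotient.mk_surjective D z
    have hwr : w.1 r0 = W.mkQ z := by
      show W.mkQ (D.mkQ r0) = W.mkQ z
      exact congrArg W.mkQ (by rw [Submodule.mkQ_apply]; exact hr0)
    have hzero : w.1 r0 = 0 := by rw [hwzero]; rfl
    rw [hwr, Submodule.mkQ_apply] at hzero
    exact hz.2 ((Submodule.Quotient.mk_eq_zero W).mp hzero)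
  -- Step 5: conclude
  have hvinj : Function.Injective ⇑v := by
    intro a1 a2 h12
    have h := congrArg ⇑φ₀ h12
    rwa [hφ₀v a1, hφ₀v a2] at h
  set φeq := LinearEquiv.ofBijective v ⟨hvinj, hvsurj⟩ with hφeq
  have hcoe : ⇑φeq = ⇑v := rfl
  have hsymcoe : ⇑φeq.symm = ⇑φ₀ := by
    funext r
    apply hvinj
    have h1 : v (φeq.symm r) = r := by
      have h := φeq.apply_symm_apply r
      rwa [hcoe] at h
    have h2 : v (φ₀ r) = r := by
      obtain ⟨b, rfl⟩ := hvsurj r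
      rw [hφ₀v b]
    rw [h1, h2]
  refine ⟨φeq, ?_, ?_, ?_⟩
  · rw [hcoe]; exact hvc
  · rw [hsymcoe]; exact hφ₀c
  · intro g a'
    show φeq (ρA g a') = ρR g (φeq a')
    rw [show φeq (ρA g a') = v (ρA g a') from rfl, show φeq a' = v a' from rfl]
    exact hvequiv g a'
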